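/- (Exactness of inverse GCR under Gomory's asymptotic condition) Suppose x° is feasible for the IP and the IP satisfies the condition that for every objective d for which the IP has an optimal solution, any optimal basis B̂ of LP^d satisfies val(IP^d) = val(G^{B̂,d}). Then ⋃_{B∈ℬ} IFR(G^B, x°) = IFR(IP, x°), where ℬ is the set of feasible LP bases; consequently min_{B∈ℬ} val(INV(G^B, x°)) = val(INV(IP, x°)). -/

import Mathlib

namespace InverseGCR17

variable {m n : ℕ}

/-- Feasibility for the IP `min{dᵀx : Ax = b, x ≥ 0, x ∈ ℤⁿ}`. -/
def IPfeas (A : Matrix (Fin m) (Fin n) ℤ) (b : Fin m → ℤ) (x : Fin n → ℤ) : Prop :=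
  A.mulVec x = b ∧ ∀ i, 0 ≤ x i

/-- Feasibility for the Gomory corner relaxation at basis `β` (nonnegativity dropped
on basic variables). -/
def Gfeas (A : Matrix (Fin m) (Fin n) ℤ) (b : Fin m → ℤ) (β : Fin m → Fin n)
    (x : Fin n → ℤ) : Prop :=
  A.mulVec x = b ∧ ∀ i ∉ Finset.image β Finset.univ, 0 ≤ x i

/-- Feasibility for the LP relaxation. -/
def LPfeas (A : Matrix (Fin m) (Fin n) ℤ) (b : Fin m → ℤ) (x : Fin n → ℝ) : Prop :=
  (A.map (Int.cast : ℤ → ℝ)).mulVec x = (fun i => (b i : ℝ)) ∧ ∀ i, 0 ≤ x i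

def obj (d : Fin n → ℝ) (x : Fin n → ℝ) : ℝ := ∑ i, d i * x i

def objZ (d : Fin n → ℝ) (x : Fin n → ℤ) : ℝ := ∑ i, d i * (x i : ℝ)

/-- The real basis matrix `A_B`. -/
def ABR (A : Matrix (Fin m) (Fin n) ℤ) (β : Fin m → Fin n) : Matrix (Fin m) (Fin m) ℝ :=
  (A.map (Int.cast : ℤ → ℝ)).submatrix id β

/-- `β` is a feasible basis of the LP relaxation: injective, nonsingular `A_B`,
and `A_B⁻¹ b ≥ 0`. -/
def FeasBasis (A : Matrix (Fin m) (Fin n) ℤ) (b : Fin m → ℤ) (β : Fin m → Fin n) : Prop :=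
  Function.Injective β ∧ IsUnit (ABR A β).det ∧
    ∀ i, 0 ≤ ((ABR A β)⁻¹.mulVec (fun i => (b i : ℝ))) i

/-- The reduced cost `d̄_j = d_j − d_Bᵀ A_B⁻¹ A_j` at basis `β` under objective `d`. -/
noncomputable def redCost (A : Matrix (Fin m) (Fin n) ℤ) (d : Fin n → ℝ) (β : Fin m → Fin n)
    (j : Fin n) : ℝ :=
  d j - dotProduct (Matrix.vecMul (fun i => d (β i)) (ABR A β)⁻¹)
    (fun i => (A i j : ℝ))

/-- Inverse-feasible region of the LP relaxation w.r.t. `x₀`. -/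
def IFR_LP (A : Matrix (Fin m) (Fin n) ℤ) (b : Fin m → ℤ) (x₀ : Fin n → ℤ) :
    Set (Fin n → ℝ) :=
  {d | ∀ x : Fin n → ℝ, LPfeas A b x → objZ d x₀ ≤ obj d x}

/-- Inverse-feasible region of the GCR at basis `β` w.r.t. `x₀`. -/
def IFR_G (A : Matrix (Fin m) (Fin n) ℤ) (b : Fin m → ℤ) (β : Fin m → Fin n)
    (x₀ : Fin n → ℤ) : Set (Fin n → ℝ) :=
  {d | ∀ x : Fin n → ℤ, Gfeas A b β x → objZ d x₀ ≤ objZ d x}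

/-- Inverse-feasible region of the IP w.r.t. `x₀`. -/
def IFR_IP (A : Matrix (Fin m) (Fin n) ℤ) (b : Fin m → ℤ) (x₀ : Fin n → ℤ) :
    Set (Fin n → ℝ) :=
  {d | ∀ x : Fin n → ℤ, IPfeas A b x → objZ d x₀ ≤ objZ d x}


/-- Optimal value (infimum in `EReal`) of `IP^d`. -/
noncomputable def valIP (A : Matrix (Fin m) (Fin n) ℤ) (b : Fin m → ℤ)
    (d : Fin n → ℝ) : EReal :=
  sInf {v : EReal | ∃ x : Fin n → ℤ, IPfeas A b x ∧ v = ((objZ d x : ℝ) : EReal)}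

/-- Optimal value (infimum in `EReal`) of `G^{B,d}`. -/
noncomputable def valG (A : Matrix (Fin m) (Fin n) ℤ) (b : Fin m → ℤ)
    (d : Fin n → ℝ) (β : Fin m → Fin n) : EReal :=
  sInf {v : EReal | ∃ x : Fin n → ℤ, Gfeas A b β x ∧ v = ((objZ d x : ℝ) : EReal)}

/-- `β` is an optimal basis of `LP^d`: a feasible basis with nonnegative reduced
costs. -/
noncomputable def OptBasis (A : Matrix (Fin m) (Fin n) ℤ) (b : Fin m → ℤ)
    (d : Fin n → ℝ) (β : Fin m → Fin n) : Prop :=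
  FeasBasis A b β ∧ ∀ j, 0 ≤ redCost A d β j

/-- Value of the inverse problem `min{‖d − c‖ : d ∈ S}` (infimum in `EReal`). -/
noncomputable def invVal (S : Set (Fin n → ℝ)) (c : Fin n → ℝ) : EReal :=
  sInf ((fun d => ((‖d - c‖ : ℝ) : EReal)) '' S)

open Matrix Finset Function

variable {m n : ℕ}

lemma cast_mulVec {k l : ℕ} (M : Matrix (Fin k) (Fin l) ℤ) (v : Fin l → ℤ) :
    (M.map ((↑) : ℤ → ℝ)).mulVec (fun j => (v j : ℝ)) = fun i => ((M.mulVec v) i : ℝ) := by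
  funext i
  simp only [Matrix.mulVec, dotProduct, Matrix.map_apply]
  push_cast
  rfl

lemma sum_mul_extend {β : Fin m → Fin n} (hβ : Function.Injective β)
    (f : Fin n → ℝ) (y : Fin m → ℝ) :
    ∑ j, f j * Function.extend β y 0 j = ∑ k, f (β k) * y k := by
  classical
  rw [← Finset.sum_subset (Finset.subset_univ (Finset.image β Finset.univ))
    (fun j _ hj => by
      rw [Function.extend_apply' _ _ _ (fun ⟨k, hk⟩ => hj (Finset.mem_image.2 ⟨k, Finset.mem_univ _, hk⟩))]
      simp)]
  rw [Finset.sum_image (fun x _ y _ h => hβ h)]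
  simp [hβ.extend_apply]

lemma eq_extend_of_supported {β : Fin m → Fin n} (hβ : Function.Injective β)
    {x : Fin n → ℝ} (hsupp : ∀ j, (¬ ∃ k, β k = j) → x j = 0) :
    x = Function.extend β (x ∘ β) 0 := by
  funext j
  by_cases h : ∃ k, β k = j
  · obtain ⟨k, rfl⟩ := h; rw [hβ.extend_apply]; rfl
  · rw [Function.extend_apply' _ _ _ h]; simpa using hsupp j h

lemma mulVec_extend {A : Matrix (Fin m) (Fin n) ℤ} {β : Fin m → Fin n}
    (hβ : Function.Injective β) (y : Fin m → ℝ) :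
    (A.map ((↑) : ℤ → ℝ)).mulVec (Function.extend β y 0) = (ABR A β).mulVec y := by
  funext i
  simpa only [Matrix.mulVec, dotProduct, ABR, Matrix.submatrix_apply, id_eq]
    using sum_mul_extend hβ (fun j => (A.map ((↑) : ℤ → ℝ)) i j) y

lemma basicVals {A : Matrix (Fin m) (Fin n) ℤ} {β : Fin m → Fin n}
    (hβ : Function.Injective β) (hu : IsUnit (ABR A β).det) {c' : Fin m → ℝ} {x : Fin n → ℝ}
    (hx : (A.map ((↑) : ℤ → ℝ)).mulVec x = c')
    (hsupp : ∀ j, (¬ ∃ k, β k = j) → x j = 0) :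
    (ABR A β)⁻¹.mulVec c' = x ∘ β := by
  rw [eq_extend_of_supported hβ hsupp, mulVec_extend hβ] at hx
  rw [← hx, Matrix.mulVec_mulVec, Matrix.nonsing_inv_mul _ hu, Matrix.one_mulVec]

lemma sum_mul_of_supported {β : Fin m → Fin n} (hβ : Function.Injective β)
    {x : Fin n → ℝ} (hsupp : ∀ j, (¬ ∃ k, β k = j) → x j = 0) (f : Fin n → ℝ) :
    ∑ j, f j * x j = ∑ k, f (β k) * x (β k) := by
  conv_lhs => rw [eq_extend_of_supported hβ hsupp]
  exact sum_mul_extend hβ f _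

/-- The columns of the real matrix span everything, given full integer row rank. -/
lemma span_cols_top (A : Matrix (Fin m) (Fin n) ℤ) (hrank : A.rank = m) :
    Submodule.span ℝ (Set.range (A.map ((↑) : ℤ → ℝ))ᵀ) = ⊤ := by
  classical
  obtain ⟨nb, bS⟩ := Submodule.basisOfPid (Pi.basisFun ℤ (Fin m)) (LinearMap.range A.mulVecLin)
  have hnb : nb = m := by
    have h1 : Module.finrank ℤ (LinearMap.range A.mulVecLin) = nb :=
      (Module.finrank_eq_card_basis bS).trans (by simp)
    rw [← hrank, Matrix.rank, h1]
  set e : Fin m ≃ Fin nb := finCongr hnb.symm with he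
  set v : Fin m → (Fin m → ℤ) := fun k => (bS (e k) : Fin m → ℤ) with hv_def
  have hv : LinearIndependent ℤ v := by
    have h0 : LinearIndependent ℤ (fun k : Fin nb => (bS k : Fin m → ℤ)) :=
      bS.linearIndependent.map' (LinearMap.range A.mulVecLin).subtype
        (Submodule.ker_subtype _)
    exact h0.comp e e.injective
  let φ : (Fin m → ℤ) →ₗ[ℤ] (Fin m → ℚ) :=
    { toFun := fun w i => (w i : ℚ)
      map_add' := by intro a b; funext i; simp
      map_smul' := by intro r a; funext i; simp
      }
  have hφinj : Function.Injective φ := fun a b h =>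
    funext fun i => Int.cast_injective (congrFun h i)
  have hq : LinearIndependent ℤ (fun k i => ((v k i : ℤ) : ℚ)) :=
    hv.map' φ (LinearMap.ker_eq_bot.2 hφinj)
  have hQ : LinearIndependent ℚ (fun k i => ((v k i : ℤ) : ℚ)) :=
    (LinearIndependent.iff_fractionRing ℤ ℚ).mp hq
  set V : Matrix (Fin m) (Fin m) ℤ := Matrix.of v with hV_def
  have hdetq : IsUnit (V.map ((↑) : ℤ → ℚ)) :=
    Matrix.linearIndependent_rows_iff_isUnit.mp hQ
  have hmapq : ((V.det : ℚ)) = (V.map ((↑) : ℤ → ℚ)).det := by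
    simpa [RingHom.mapMatrix_apply] using RingHom.map_det (Int.castRingHom ℚ) V
  have hdz : V.det ≠ 0 := by
    intro h
    have h2 := (Matrix.isUnit_iff_isUnit_det _).1 hdetq
    rw [← hmapq, h] at h2
    simp at h2
  have hdetR : IsUnit (V.map ((↑) : ℤ → ℝ)).det := by
    have hmapr : ((V.det : ℝ)) = (V.map ((↑) : ℤ → ℝ)).det := by
      simpa [RingHom.mapMatrix_apply] using RingHom.map_det (Int.castRingHom ℝ) V
    rw [← hmapr]
    exact isUnit_iff_ne_zero.2 (by exact_mod_cast hdz)
  have hliR : LinearIndependent ℝ (fun k => (V.map ((↑) : ℤ → ℝ)) k) :=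
    Matrix.linearIndependent_rows_iff_isUnit.mpr ((Matrix.isUnit_iff_isUnit_det _).2 hdetR)
  have hmem : ∀ k, (V.map ((↑) : ℤ → ℝ)) k ∈
      Submodule.span ℝ (Set.range (A.map ((↑) : ℤ → ℝ))ᵀ) := by
    intro k
    obtain ⟨x, hx⟩ := (bS (e k)).2
    have hvk : A.mulVec x = v k := by
      have : A.mulVecLin x = (bS (e k) : Fin m → ℤ) := hx
      simpa [Matrix.mulVecLin_apply, hv_def] using this
    have hcol : (V.map ((↑) : ℤ → ℝ)) k = (A.map ((↑) : ℤ → ℝ)).mulVec (fun j => (x j : ℝ)) := by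
      rw [cast_mulVec, hvk]
      rfl
    rw [hcol]
    change _ ∈ Submodule.span ℝ (Set.range (Matrix.col (A.map ((↑) : ℤ → ℝ))))
    rw [← Matrix.range_mulVecLin]
    exact ⟨_, rfl⟩
  have htop : Submodule.span ℝ (Set.range fun k => (V.map ((↑) : ℤ → ℝ)) k) = ⊤ :=
    hliR.span_eq_top_of_card_eq_finrank'
      (by simp [Module.finrank_fintype_fun_eq_card])
  rw [eq_top_iff, ← htop]
  refine Submodule.span_le.2 ?_
  rintro _ ⟨k, rfl⟩
  exact hmem k
open scoped Classical

lemma ext_basis (A : Matrix (Fin m) (Fin n) ℤ)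
    (hspan : Submodule.span ℝ (Set.range (A.map ((↑) : ℤ → ℝ))ᵀ) = ⊤) :
    ∀ (t k : ℕ) (g : Fin k → Fin n), k + t = m → Function.Injective g →
      LinearIndependent ℝ (fun i => (A.map ((↑) : ℤ → ℝ))ᵀ (g i)) →
      ∃ β : Fin m → Fin n, Function.Injective β ∧ IsUnit (ABR A β).det ∧
        ∀ i, ∃ i', β i' = g i := by
  intro t
  induction t with
  | zero =>
    intro k g hk hg hli
    have hkm : k = m := by omega
    subst hkm
    refine ⟨g, hg, ?_, fun i => ⟨i, rfl⟩⟩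
    have hcols : LinearIndependent ℝ (fun i => (ABR A g)ᵀ i) := hli
    exact (Matrix.isUnit_iff_isUnit_det _).1 (Matrix.linearIndependent_cols_iff_isUnit.1 hcols)
  | succ t ih =>
    intro k g hk hg hli
    have hkm : k < m := by omega
    have hex : ∃ j, (A.map ((↑) : ℤ → ℝ))ᵀ j ∉
        Submodule.span ℝ (Set.range fun i => (A.map ((↑) : ℤ → ℝ))ᵀ (g i)) := by
      by_contra h
      push_neg at h
      have hle : Submodule.span ℝ (Set.range (A.map ((↑) : ℤ → ℝ))ᵀ) ≤
          Submodule.span ℝ (Set.range fun i => (A.map ((↑) : ℤ → ℝ))ᵀ (g i)) :=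
        Submodule.span_le.2 (by rintro _ ⟨j, rfl⟩; exact h j)
      rw [hspan, top_le_iff] at hle
      have h1 : Module.finrank ℝ (Submodule.span ℝ
          (Set.range fun i => (A.map ((↑) : ℤ → ℝ))ᵀ (g i))) = k := by
        rw [finrank_span_eq_card hli]; simp
      rw [hle] at h1
      rw [finrank_top, Module.finrank_fintype_fun_eq_card] at h1
      simp at h1
      omega
    obtain ⟨j, hj⟩ := hex
    have hjr : ∀ i, g i ≠ j := fun i hij =>
      hj (hij ▸ Submodule.subset_span ⟨i, rfl⟩)
    set g' : Fin (k + 1) → Fin n := Fin.snoc g j with hg'def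
    have hcomp : (fun i => (A.map ((↑) : ℤ → ℝ))ᵀ (g' i)) =
        Fin.snoc (fun i => (A.map ((↑) : ℤ → ℝ))ᵀ (g i)) ((A.map ((↑) : ℤ → ℝ))ᵀ j) := by
      funext i
      rcases Fin.eq_castSucc_or_eq_last i with ⟨i', rfl⟩ | rfl <;> simp [hg'def]
    have hg'li : LinearIndependent ℝ (fun i => (A.map ((↑) : ℤ → ℝ))ᵀ (g' i)) := by
      rw [hcomp, linearIndependent_fin_snoc]
      exact ⟨hli, hj⟩
    have hg' : Function.Injective g' := by
      intro a b hab
      rcases Fin.eq_castSucc_or_eq_last a with ⟨a', rfl⟩ | rfl <;>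
        rcases Fin.eq_castSucc_or_eq_last b with ⟨b', rfl⟩ | rfl
      · rw [hg'def, Fin.snoc_castSucc, Fin.snoc_castSucc] at hab
        exact congrArg Fin.castSucc (hg hab)
      · rw [hg'def, Fin.snoc_castSucc, Fin.snoc_last] at hab
        exact absurd hab (hjr a')
      · rw [hg'def, Fin.snoc_castSucc, Fin.snoc_last] at hab
        exact absurd hab.symm (hjr b')
      · rfl
    obtain ⟨β, h1, h2, h3⟩ := ih (k + 1) g' (by omega) hg' hg'li
    refine ⟨β, h1, h2, fun i => ?_⟩
    obtain ⟨i', hi'⟩ := h3 (Fin.castSucc i)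
    refine ⟨i', ?_⟩
    rwa [hg'def, Fin.snoc_castSucc] at hi'

lemma bfs_indep {A : Matrix (Fin m) (Fin n) ℤ}
    (hspan : Submodule.span ℝ (Set.range (A.map ((↑) : ℤ → ℝ))ᵀ) = ⊤)
    {x : Fin n → ℝ} {c' : Fin m → ℝ}
    (hx : (A.map ((↑) : ℤ → ℝ)).mulVec x = c') (hxn : ∀ j, 0 ≤ x j)
    (hli : LinearIndependent ℝ
      (fun s : {j // j ∈ Finset.univ.filter (fun j => x j ≠ 0)} =>
        (A.map ((↑) : ℤ → ℝ))ᵀ (s : Fin n))) :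
    ∃ β : Fin m → Fin n, Function.Injective β ∧ IsUnit (ABR A β).det ∧
      ∀ i, 0 ≤ ((ABR A β)⁻¹.mulVec c') i := by
  set S := Finset.univ.filter (fun j => x j ≠ 0) with hS
  set e := S.orderIsoOfFin rfl with he
  set g : Fin S.card → Fin n := fun i => (e i : Fin n) with hg
  have hginj : Function.Injective g := fun a b hab => e.injective (Subtype.ext hab)
  have hgli : LinearIndependent ℝ (fun i => (A.map ((↑) : ℤ → ℝ))ᵀ (g i)) :=
    hli.comp e e.injective
  have hcard : S.card ≤ m := by
    have := hgli.fintype_card_le_finrank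
    rwa [Module.finrank_fintype_fun_eq_card, Fintype.card_fin, Fintype.card_fin] at this
  obtain ⟨β, hβi, hβu, hβr⟩ := ext_basis A hspan (m - S.card) S.card g (by omega) hginj hgli
  have hsupp : ∀ j, (¬ ∃ k, β k = j) → x j = 0 := by
    intro j hj
    by_contra hxj
    have hjS : j ∈ S := by rw [hS]; simp [hxj]
    obtain ⟨i', hi'⟩ := hβr (e.symm ⟨j, hjS⟩)
    exact hj ⟨i', by rw [hi', hg]; simp⟩
  refine ⟨β, hβi, hβu, fun i => ?_⟩
  rw [basicVals hβi hβu hx hsupp]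
  exact hxn (β i)

lemma bfs {A : Matrix (Fin m) (Fin n) ℤ}
    (hspan : Submodule.span ℝ (Set.range (A.map ((↑) : ℤ → ℝ))ᵀ) = ⊤) :
    ∀ (N : ℕ) (x : Fin n → ℝ) (c' : Fin m → ℝ),
      (Finset.univ.filter (fun j => x j ≠ 0)).card ≤ N →
      (A.map ((↑) : ℤ → ℝ)).mulVec x = c' → (∀ j, 0 ≤ x j) →
      ∃ β : Fin m → Fin n, Function.Injective β ∧ IsUnit (ABR A β).det ∧
        ∀ i, 0 ≤ ((ABR A β)⁻¹.mulVec c') i := by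
  intro N
  induction N with
  | zero =>
    intro x c' hcard hx hxn
    have hS : Finset.univ.filter (fun j => x j ≠ 0) = ∅ := Finset.card_eq_zero.1 (by omega)
    have : IsEmpty {j // j ∈ Finset.univ.filter (fun j => x j ≠ 0)} :=
      ⟨fun s => Finset.eq_empty_iff_forall_notMem.1 hS _ s.2⟩
    exact bfs_indep hspan hx hxn linearIndependent_empty_type
  | succ N ih =>
    intro x c' hcard hx hxn
    set S := Finset.univ.filter (fun j => x j ≠ 0) with hSdef
    by_cases hli : LinearIndependent ℝ
      (fun s : {j // j ∈ S} => (A.map ((↑) : ℤ → ℝ))ᵀ (s : Fin n))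
    · exact bfs_indep hspan hx hxn hli
    · have red : ∀ z : Fin n → ℝ, (A.map ((↑) : ℤ → ℝ)).mulVec z = 0 →
          (∀ j, j ∉ S → z j = 0) → (∃ j, 0 < z j) →
          ∃ β : Fin m → Fin n, Function.Injective β ∧ IsUnit (ABR A β).det ∧
            ∀ i, 0 ≤ ((ABR A β)⁻¹.mulVec c') i := by
        rintro z hz hzsupp ⟨j₀, hj₀⟩
        obtain ⟨r, hrP, hrmin⟩ := Finset.exists_min_image
          (Finset.univ.filter (fun j => 0 < z j)) (fun j => x j / z j)
          ⟨j₀, by simp [hj₀]⟩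
        have hzr : 0 < z r := by simpa using (Finset.mem_filter.1 hrP).2
        have hrS : r ∈ S := by
          by_contra h
          rw [hzsupp r h] at hzr; exact lt_irrefl _ hzr
        set θ := x r / z r with hθ
        have hθn : 0 ≤ θ := div_nonneg (hxn r) (le_of_lt hzr)
        set x' : Fin n → ℝ := fun j => x j - θ * z j with hx'def
        have hx' : (A.map ((↑) : ℤ → ℝ)).mulVec x' = c' := by
          have : x' = x - θ • z := by funext j; simp [hx'def]
          rw [this, Matrix.mulVec_sub, Matrix.mulVec_smul, hz, hx]
          simp
        have hxn' : ∀ j, 0 ≤ x' j := by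
          intro j
          rcases le_or_gt (z j) 0 with hzj | hzj
          · have : θ * z j ≤ 0 := mul_nonpos_of_nonneg_of_nonpos hθn hzj
            simp only [hx'def]
            linarith [hxn j]
          · have hmin := hrmin j (by simp [hzj])
            rw [div_le_div_iff₀ hzr hzj] at hmin
            simp only [hx'def, hθ, sub_nonneg, div_mul_eq_mul_div, div_le_iff₀ hzr]
            linarith
        have hsupp' : ∀ j, x' j ≠ 0 → j ∈ S.erase r := by
          intro j hj
          rcases eq_or_ne j r with rfl | hjr
          · exfalso; apply hj
            simp only [hx'def, hθ]
            field_simp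
            simp
          · refine Finset.mem_erase.2 ⟨hjr, ?_⟩
            by_contra hjS
            apply hj
            have hxj : x j = 0 := by
              by_contra h; exact hjS (by rw [hSdef]; simp [h])
            simp [hx'def, hxj, hzsupp j hjS]
        have hcard' : (Finset.univ.filter (fun j => x' j ≠ 0)).card ≤ N := by
          have h1 : (Finset.univ.filter (fun j => x' j ≠ 0)) ⊆ S.erase r := by
            intro j hj; exact hsupp' j (by simpa using (Finset.mem_filter.1 hj).2)
          have h2 := Finset.card_le_card h1
          rw [Finset.card_erase_of_mem hrS] at h2
          omega
        exact ih x' c' hcard' hx' hxn'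
      obtain ⟨gc, hgc0, s₀, hgs₀⟩ := Fintype.not_linearIndependent_iff.1 hli
      set z : Fin n → ℝ := fun j => if h : j ∈ S then gc ⟨j, h⟩ else 0 with hzdef
      have hzsupp : ∀ j, j ∉ S → z j = 0 := by intro j hj; simp [hzdef, hj]
      have hAz : (A.map ((↑) : ℤ → ℝ)).mulVec z = 0 := by
        funext i
        have h0 := congrFun hgc0 i
        simp only [Finset.sum_apply, Pi.smul_apply, Pi.zero_apply, smul_eq_mul] at h0
        simp only [Matrix.mulVec, dotProduct, Pi.zero_apply]
        rw [← Finset.sum_subset (Finset.subset_univ S)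
          (fun j _ hj => by rw [hzsupp j hj, mul_zero])]
        rw [← Finset.sum_attach S (fun j => (A.map ((↑) : ℤ → ℝ)) i j * z j)]
        rw [← h0]
        refine Finset.sum_congr (by simp) (fun s _ => ?_)
        have : z (s : Fin n) = gc s := by simp [hzdef, s.2]
        rw [this, Matrix.transpose_apply]
        ring
      rcases lt_trichotomy (z s₀) 0 with hneg | hzero | hpos
      · refine red (-z) (by rw [Matrix.mulVec_neg, hAz]; simp)
          (fun j hj => by rw [Pi.neg_apply, hzsupp j hj, neg_zero])
          ⟨s₀, by simpa using hneg⟩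
      · exfalso; apply hgs₀
        have : z (s₀ : Fin n) = gc s₀ := by simp [hzdef, s₀.2]
        rw [← this, hzero]
      · exact red z hAz hzsupp ⟨s₀, hpos⟩
lemma objZ_add (d : Fin n → ℝ) (x v : Fin n → ℤ) :
    objZ d (x + v) = objZ d x + ∑ j, d j * ((v j : ℤ) : ℝ) := by
  rw [objZ, objZ, ← Finset.sum_add_distrib]
  refine Finset.sum_congr rfl (fun j _ => ?_)
  simp only [Pi.add_apply]
  push_cast
  ring

lemma redCost_eq {A : Matrix (Fin m) (Fin n) ℤ} (d : Fin n → ℝ) (β : Fin m → Fin n) (j : Fin n) :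
    redCost A d β j = d j - ∑ k, d (β k) * ((ABR A β)⁻¹.mulVec (fun i => (A i j : ℝ))) k := by
  rw [redCost, ← Matrix.dotProduct_mulVec]
  rfl

lemma redCost_basic {A : Matrix (Fin m) (Fin n) ℤ} (d : Fin n → ℝ) {β : Fin m → Fin n}
    (hu : IsUnit (ABR A β).det) (k : Fin m) : redCost A d β (β k) = 0 := by
  rw [redCost_eq]
  have hcol : (fun i => ((A i (β k) : ℤ) : ℝ)) = (ABR A β).mulVec (Pi.single k 1) := by
    funext i
    rw [Matrix.mulVec_single]
    simp [ABR]
  rw [hcol, Matrix.mulVec_mulVec, Matrix.nonsing_inv_mul _ hu, Matrix.one_mulVec]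
  have : ∑ k', d (β k') * Pi.single (M := fun _ : Fin m => ℝ) k 1 k' = d (β k) := by
    rw [Finset.sum_eq_single k]
    · simp
    · intro k' _ hk'; simp [Pi.single_eq_of_ne hk']
    · intro h; exact absurd (Finset.mem_univ k) h
  rw [this]
  ring

/-- The simplex direction at basis `β`, entering column `j`. -/
noncomputable def wdir (A : Matrix (Fin m) (Fin n) ℤ) (β : Fin m → Fin n) (j : Fin n) :
    Fin n → ℝ :=
  (fun j' => if j' = j then (1 : ℝ) else 0) -
    Function.extend β ((ABR A β)⁻¹.mulVec (fun i => (A i j : ℝ))) 0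

lemma mulVec_indicator {A : Matrix (Fin m) (Fin n) ℤ} (j : Fin n) :
    (A.map ((↑) : ℤ → ℝ)).mulVec (fun j' => if j' = j then (1 : ℝ) else 0) =
      (fun i => (A i j : ℝ)) := by
  funext i
  simp only [Matrix.mulVec, dotProduct, mul_ite, mul_one, mul_zero]
  rw [Finset.sum_ite_eq' Finset.univ j (fun j' => (A.map ((↑) : ℤ → ℝ)) i j')]
  simp [Matrix.map_apply]

lemma mulVec_wdir {A : Matrix (Fin m) (Fin n) ℤ} {β : Fin m → Fin n}
    (hβ : Function.Injective β) (hu : IsUnit (ABR A β).det) (j : Fin n) :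
    (A.map ((↑) : ℤ → ℝ)).mulVec (wdir A β j) = 0 := by
  rw [wdir, Matrix.mulVec_sub, mulVec_indicator, mulVec_extend hβ,
    Matrix.mulVec_mulVec, Matrix.mul_nonsing_inv _ hu, Matrix.one_mulVec]
  simp

lemma sum_mul_wdir {A : Matrix (Fin m) (Fin n) ℤ} {β : Fin m → Fin n}
    (hβ : Function.Injective β) (d : Fin n → ℝ) (j : Fin n) :
    ∑ j', d j' * wdir A β j j' = redCost A d β j := by
  rw [redCost_eq]
  simp only [wdir, Pi.sub_apply, mul_sub]
  rw [Finset.sum_sub_distrib]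
  congr 1
  · simp only [mul_ite, mul_one, mul_zero]
    rw [Finset.sum_ite_eq' Finset.univ j d]
    simp
  · exact sum_mul_extend hβ d _

lemma wdir_at_basic {A : Matrix (Fin m) (Fin n) ℤ} {β : Fin m → Fin n}
    (hβ : Function.Injective β) {j : Fin n} (hjβ : ¬ ∃ k, β k = j) (k : Fin m) :
    wdir A β j (β k) = -((ABR A β)⁻¹.mulVec (fun i => (A i j : ℝ))) k := by
  have h1 : β k ≠ j := fun h => hjβ ⟨k, h⟩
  simp [wdir, h1, hβ.extend_apply]

lemma wdir_at_j {A : Matrix (Fin m) (Fin n) ℤ} {β : Fin m → Fin n}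
    {j : Fin n} (hjβ : ¬ ∃ k, β k = j) : wdir A β j j = 1 := by
  rw [wdir, Pi.sub_apply, Function.extend_apply' _ _ _ hjβ]
  simp

lemma wdir_at_other {A : Matrix (Fin m) (Fin n) ℤ} {β : Fin m → Fin n}
    {j j' : Fin n} (h1 : j' ≠ j) (h2 : ¬ ∃ k, β k = j') : wdir A β j j' = 0 := by
  rw [wdir, Pi.sub_apply, Function.extend_apply' _ _ _ h2]
  simp [h1]

/-- The ray case: if the reduced cost is negative and the simplex direction has no
positive basic entry, we contradict optimality of `x₀` for the IP. -/
lemma ray_contradiction {A : Matrix (Fin m) (Fin n) ℤ} {b : Fin m → ℤ} {d : Fin n → ℝ}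
    {x₀ : Fin n → ℤ} (hx₀ : IPfeas A b x₀)
    (hd : ∀ x, IPfeas A b x → objZ d x₀ ≤ objZ d x)
    {β : Fin m → Fin n} (hβ : Function.Injective β) (hu : IsUnit (ABR A β).det)
    {j : Fin n} (hrc : redCost A d β j < 0)
    (hneg : ∀ i, ((ABR A β)⁻¹.mulVec (fun i => (A i j : ℝ))) i ≤ 0) : False := by
  classical
  set MZ := A.submatrix id β with hMZ
  have hABR : ABR A β = MZ.map ((↑) : ℤ → ℝ) := rfl
  set u := (ABR A β)⁻¹.mulVec (fun i => (A i j : ℝ)) with hu_def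
  have hdetcast : ((MZ.det : ℤ) : ℝ) = (ABR A β).det := by
    rw [hABR]
    simpa [RingHom.mapMatrix_apply] using RingHom.map_det (Int.castRingHom ℝ) MZ
  have hDZ : MZ.det ≠ 0 := by
    intro h
    rw [← hdetcast] at hu
    simp [h] at hu
  have hjβ : ¬ ∃ k, β k = j := by
    rintro ⟨k, rfl⟩
    rw [redCost_basic d hu k] at hrc
    exact lt_irrefl _ hrc
  have hMu : (ABR A β).mulVec u = (fun i => (A i j : ℝ)) := by
    rw [hu_def, Matrix.mulVec_mulVec, Matrix.mul_nonsing_inv _ hu, Matrix.one_mulVec]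
  have hadjcol : (ABR A β).adjugate.mulVec (fun i => (A i j : ℝ)) = (ABR A β).det • u := by
    rw [← hMu, Matrix.mulVec_mulVec, Matrix.adjugate_mul, Matrix.smul_mulVec,
      Matrix.one_mulVec]
  set uZ := MZ.adjugate.mulVec (fun i => A i j) with huZ
  have hadjmap : MZ.adjugate.map ((↑) : ℤ → ℝ) = (ABR A β).adjugate := by
    rw [hABR]
    simpa [RingHom.mapMatrix_apply] using RingHom.map_adjugate (Int.castRingHom ℝ) MZ
  have hcastu : ∀ i, ((uZ i : ℤ) : ℝ) = ((MZ.det : ℤ) : ℝ) * u i := by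
    intro i
    have h1 := congrFun (cast_mulVec MZ.adjugate (fun i => A i j)) i
    rw [hadjmap] at h1
    rw [huZ, ← h1, hadjcol, ← hdetcast]
    simp
  set s : ℤ := if 0 < MZ.det then 1 else -1 with hs
  have hsD : 0 < s * MZ.det := by
    rcases lt_trichotomy MZ.det 0 with h | h | h
    · rw [hs, if_neg (by omega)]; omega
    · exact absurd h hDZ
    · rw [hs, if_pos h]; omega
  set vZ : Fin n → ℤ :=
    fun j' => (if j' = j then s * MZ.det else 0) - s * (Function.extend β uZ 0 j') with hvZ
  have hvw : ∀ j', ((vZ j' : ℤ) : ℝ) = ((s * MZ.det : ℤ) : ℝ) * wdir A β j j' := by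
    intro j'
    by_cases h1 : j' = j
    · subst h1
      have h0 : vZ j' = s * MZ.det := by
        simp only [hvZ]
        rw [Function.extend_apply' _ _ _ hjβ]
        simp
      rw [wdir_at_j hjβ, h0]
      push_cast
      ring
    · by_cases h2 : ∃ k, β k = j'
      · obtain ⟨k, rfl⟩ := h2
        have hne : β k ≠ j := fun h => hjβ ⟨k, h⟩
        have h0 : vZ (β k) = -(s * uZ k) := by
          simp only [hvZ]
          rw [if_neg hne, hβ.extend_apply]
          ring
        rw [wdir_at_basic hβ hjβ k, h0]
        push_cast
        rw [hcastu k]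
        have e1 : ((MZ.map fun x => (x:ℝ)).det) = (MZ.det : ℝ) := hdetcast.symm
        rw [e1, hu_def]
        ring
      · have h0 : vZ j' = 0 := by
          simp only [hvZ]
          rw [if_neg h1, Function.extend_apply' _ _ _ h2]
          simp
        rw [wdir_at_other h1 h2, h0]
        simp
  have hAv : A.mulVec vZ = 0 := by
    have h1 : (A.map ((↑) : ℤ → ℝ)).mulVec (fun j' => ((vZ j' : ℤ) : ℝ)) =
        fun i => ((A.mulVec vZ) i : ℝ) := cast_mulVec A vZ
    have h2 : (fun j' => ((vZ j' : ℤ) : ℝ)) = ((s * MZ.det : ℤ) : ℝ) • wdir A β j := by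
      funext j'; rw [hvw j']; rfl
    rw [h2, Matrix.mulVec_smul, mulVec_wdir hβ hu, smul_zero] at h1
    funext i
    have := congrFun h1.symm i
    simpa using this
  have hvpos : ∀ j', 0 ≤ vZ j' := by
    intro j'
    have hv := hvw j'
    by_cases h1 : j' = j
    · subst h1
      rw [wdir_at_j hjβ, mul_one] at hv
      have : (0 : ℝ) ≤ ((vZ j' : ℤ) : ℝ) := by rw [hv]; exact_mod_cast hsD.le
      exact_mod_cast this
    · by_cases h2 : ∃ k, β k = j'
      · obtain ⟨k, rfl⟩ := h2
        rw [wdir_at_basic hβ hjβ k] at hv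
        have hle : (0 : ℝ) ≤ ((vZ (β k) : ℤ) : ℝ) := by
          rw [hv]
          have h3 : (0:ℝ) < ((s * MZ.det : ℤ) : ℝ) := by exact_mod_cast hsD
          have h4 := hneg k
          nlinarith
        exact_mod_cast hle
      · rw [wdir_at_other h1 h2, mul_zero] at hv
        have : ((vZ j' : ℤ) : ℝ) = 0 := hv
        exact le_of_eq (by exact_mod_cast this.symm)
  have hobj : ∑ j', d j' * ((vZ j' : ℤ) : ℝ) =
      ((s * MZ.det : ℤ) : ℝ) * redCost A d β j := by
    rw [← sum_mul_wdir hβ d j, Finset.mul_sum]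
    refine Finset.sum_congr rfl (fun j' _ => ?_)
    rw [hvw j']
    ring
  have hobjneg : ∑ j', d j' * ((vZ j' : ℤ) : ℝ) < 0 := by
    rw [hobj]
    have h3 : (0:ℝ) < ((s * MZ.det : ℤ) : ℝ) := by exact_mod_cast hsD
    exact mul_neg_of_pos_of_neg h3 hrc
  have hfeas : IPfeas A b (x₀ + vZ) := by
    constructor
    · rw [Matrix.mulVec_add, hAv, hx₀.1]; simp
    · intro i; have := hx₀.2 i; have := hvpos i; simp only [Pi.add_apply]; omega
  have hle := hd _ hfeas
  rw [objZ_add] at hle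
  linarith
lemma pivot_step {A : Matrix (Fin m) (Fin n) ℤ} (d : Fin n → ℝ) {c' : Fin m → ℝ}
    {β : Fin m → Fin n} (hβ : Function.Injective β) (hu : IsUnit (ABR A β).det)
    (hfeas : ∀ i, 0 ≤ ((ABR A β)⁻¹.mulVec c') i)
    (hnd : ∀ i, ((ABR A β)⁻¹.mulVec c') i ≠ 0)
    {j : Fin n} (hrc : redCost A d β j < 0)
    (hpos : ∃ i, 0 < ((ABR A β)⁻¹.mulVec (fun i => (A i j : ℝ))) i) :
    ∃ β' : Fin m → Fin n, Function.Injective β' ∧ IsUnit (ABR A β').det ∧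
      (∀ i, 0 ≤ ((ABR A β')⁻¹.mulVec c') i) ∧
      ∑ k, d (β' k) * ((ABR A β')⁻¹.mulVec c') k <
        ∑ k, d (β k) * ((ABR A β)⁻¹.mulVec c') k := by
  classical
  set u := (ABR A β)⁻¹.mulVec (fun i => (A i j : ℝ)) with hu_def
  set xb := (ABR A β)⁻¹.mulVec c' with hxb
  obtain ⟨i₀, hi₀⟩ := hpos
  obtain ⟨r, hrP, hrmin⟩ := Finset.exists_min_image (Finset.univ.filter (fun i => 0 < u i))
      (fun i => xb i / u i) ⟨i₀, Finset.mem_filter.2 ⟨Finset.mem_univ _, hi₀⟩⟩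
  have hur : 0 < u r := by simpa using (Finset.mem_filter.1 hrP).2
  have hxbr : 0 < xb r := lt_of_le_of_ne (hfeas r) (Ne.symm (hnd r))
  set θ := xb r / u r with hθ
  have hθpos : 0 < θ := div_pos hxbr hur
  have hjβ : ¬ ∃ k, β k = j := by
    rintro ⟨k, rfl⟩; rw [redCost_basic d hu k] at hrc; exact lt_irrefl _ hrc
  set β' := Function.update β r j with hβ'def
  have hβ'r : β' r = j := Function.update_self r j β
  have hβ'k : ∀ k, k ≠ r → β' k = β k := fun k hk => Function.update_of_ne hk j β
  have hβ'inj : Function.Injective β' := by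
    intro a b hab
    by_cases ha : a = r <;> by_cases hb : b = r
    · rw [ha, hb]
    · exfalso; rw [ha, hβ'r, hβ'k b hb] at hab; exact hjβ ⟨b, hab.symm⟩
    · exfalso; rw [hb, hβ'r, hβ'k a ha] at hab; exact hjβ ⟨a, hab⟩
    · rw [hβ'k a ha, hβ'k b hb] at hab; exact hβ hab
  have hupd : ABR A β' = (ABR A β).updateCol r (fun i => (A i j : ℝ)) := by
    ext i k
    rcases eq_or_ne k r with rfl | hk
    · rw [Matrix.updateCol_self]; simp [ABR, hβ'r]
    · rw [Matrix.updateCol_ne hk]; simp [ABR, hβ'k k hk]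
  have hMu : (ABR A β).mulVec u = (fun i => (A i j : ℝ)) := by
    rw [hu_def, Matrix.mulVec_mulVec, Matrix.mul_nonsing_inv _ hu, Matrix.one_mulVec]
  have hadjcol : (ABR A β).adjugate.mulVec (fun i => (A i j : ℝ)) = (ABR A β).det • u := by
    rw [← hMu, Matrix.mulVec_mulVec, Matrix.adjugate_mul, Matrix.smul_mulVec,
      Matrix.one_mulVec]
  have hdet' : (ABR A β').det = (ABR A β).det * u r := by
    rw [hupd, ← Matrix.cramer_apply, Matrix.cramer_eq_adjugate_mulVec, hadjcol]
    simp
  have hu' : IsUnit (ABR A β').det := by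
    rw [hdet']
    exact isUnit_iff_ne_zero.2 (mul_ne_zero hu.ne_zero (ne_of_gt hur))
  set x1 := Function.extend β xb 0 with hx1
  set x' := x1 + θ • wdir A β j with hx'
  have hAx1 : (A.map ((↑) : ℤ → ℝ)).mulVec x1 = c' := by
    rw [hx1, mulVec_extend hβ, hxb, Matrix.mulVec_mulVec, Matrix.mul_nonsing_inv _ hu,
      Matrix.one_mulVec]
  have hAx' : (A.map ((↑) : ℤ → ℝ)).mulVec x' = c' := by
    rw [hx', Matrix.mulVec_add, Matrix.mulVec_smul, mulVec_wdir hβ hu, hAx1]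
    simp
  have hvalb : ∀ k, x' (β k) = xb k - θ * u k := by
    intro k
    rw [hx', Pi.add_apply, Pi.smul_apply, hx1, hβ.extend_apply, wdir_at_basic hβ hjβ k]
    simp only [smul_eq_mul]
    ring
  have hvalj : x' j = θ := by
    rw [hx', Pi.add_apply, Pi.smul_apply, hx1, Function.extend_apply' _ _ _ hjβ,
      wdir_at_j hjβ]
    simp
  have hval0 : ∀ j', (¬ ∃ k, β k = j') → j' ≠ j → x' j' = 0 := by
    intro j' h2 h1
    rw [hx', Pi.add_apply, Pi.smul_apply, hx1, Function.extend_apply' _ _ _ h2,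
      wdir_at_other h1 h2]
    simp
  have hsupp : ∀ j', (¬ ∃ k, β' k = j') → x' j' = 0 := by
    intro j' hj'
    have h1 : j' ≠ j := fun h => hj' ⟨r, by rw [hβ'r, h]⟩
    by_cases h2 : ∃ k, β k = j'
    · obtain ⟨k, rfl⟩ := h2
      have hkr : k = r := by
        by_contra hkr
        exact hj' ⟨k, by rw [hβ'k k hkr]⟩
      subst hkr
      rw [hvalb k, hθ, div_mul_cancel₀ _ (ne_of_gt hur), sub_self]
    · exact hval0 j' h2 h1
  have hx'n : ∀ j', 0 ≤ x' j' := by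
    intro j'
    by_cases h1 : j' = j
    · subst h1; rw [hvalj]; exact hθpos.le
    · by_cases h2 : ∃ k, β k = j'
      · obtain ⟨k, rfl⟩ := h2
        rw [hvalb k]
        rcases le_or_gt (u k) 0 with huk | huk
        · have : θ * u k ≤ 0 := mul_nonpos_of_nonneg_of_nonpos hθpos.le huk
          linarith [hfeas k]
        · have hmin := hrmin k (by simp [huk])
          rw [div_le_div_iff₀ hur huk] at hmin
          rw [sub_nonneg, hθ, div_mul_eq_mul_div, div_le_iff₀ hur]
          linarith
      · rw [hval0 _ h2 h1]
  have hbv' : (ABR A β')⁻¹.mulVec c' = x' ∘ β' := basicVals hβ'inj hu' hAx' hsupp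
  refine ⟨β', hβ'inj, hu', ?_, ?_⟩
  · intro i; rw [hbv']; exact hx'n (β' i)
  · have hL : ∑ k, d (β' k) * ((ABR A β')⁻¹.mulVec c') k = ∑ j', d j' * x' j' := by
      rw [hbv']
      exact (sum_mul_of_supported hβ'inj hsupp d).symm
    have hR : ∑ j', d j' * x' j' = (∑ k, d (β k) * xb k) + θ * redCost A d β j := by
      rw [hx']
      simp only [Pi.add_apply, Pi.smul_apply, smul_eq_mul, mul_add]
      rw [Finset.sum_add_distrib]
      congr 1
      · rw [hx1]; exact sum_mul_extend hβ d xb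
      · rw [← sum_mul_wdir hβ d j, Finset.mul_sum]
        refine Finset.sum_congr rfl fun j' _ => by ring
    rw [hL, hR]
    have : θ * redCost A d β j < 0 := mul_neg_of_pos_of_neg hθpos hrc
    linarith
lemma exists_optBasis {A : Matrix (Fin m) (Fin n) ℤ} {b : Fin m → ℤ} {d : Fin n → ℝ}
    (hrank : A.rank = m) {x₀ : Fin n → ℤ} (hx₀ : IPfeas A b x₀)
    (hd : ∀ x, IPfeas A b x → objZ d x₀ ≤ objZ d x) :
    ∃ β, OptBasis A b d β := by
  classical
  set bR : Fin m → ℝ := fun i => (b i : ℝ) with hbR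
  have hspan := span_cols_top A hrank
  have hx0cast : (A.map ((↑) : ℤ → ℝ)).mulVec (fun j => (x₀ j : ℝ)) = bR := by
    rw [cast_mulVec, hx₀.1]
  obtain ⟨β₀, hβ₀i, hβ₀u, hβ₀f⟩ := bfs hspan
    (Finset.univ.filter (fun j => (fun j => ((x₀ j : ℤ) : ℝ)) j ≠ 0)).card
    (fun j => (x₀ j : ℝ)) bR le_rfl hx0cast (fun j => by show (0:ℝ) ≤ ((x₀ j : ℤ) : ℝ); exact_mod_cast hx₀.2 j)
  set εv : ℝ → Fin m → ℝ := fun ε i => ε ^ ((i : ℕ) + 1) with hεv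
  set cfun : ℝ → Fin m → ℝ := fun ε => bR + (ABR A β₀).mulVec (εv ε) with hcfun
  have hg : ∀ (β : Fin m → Fin n) (i : Fin m) (ε : ℝ),
      ((ABR A β)⁻¹.mulVec (cfun ε)) i = ((ABR A β)⁻¹.mulVec bR) i +
        ∑ k, ((ABR A β)⁻¹ * ABR A β₀) i k * ε ^ ((k : ℕ) + 1) := by
    intro β i ε
    rw [hcfun]
    simp only [Matrix.mulVec_add, Pi.add_apply, ← Matrix.mulVec_mulVec]
    congr 1
    rw [Matrix.mulVec_mulVec]
    simp [Matrix.mulVec, dotProduct, hεv]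
  set F := nhdsWithin (0 : ℝ) (Set.Ioi 0) with hF
  have hev1 : ∀ᶠ ε in F, ∀ p : (Fin m → Fin n) × Fin m,
      (Function.Injective p.1 ∧ IsUnit (ABR A p.1).det) →
      ((ABR A p.1)⁻¹.mulVec bR) p.2 < 0 →
      ((ABR A p.1)⁻¹.mulVec (cfun ε)) p.2 < 0 := by
    rw [Filter.eventually_all]
    intro p
    by_cases hp : ((ABR A p.1)⁻¹.mulVec bR) p.2 < 0
    · have hc : Continuous (fun ε => ((ABR A p.1)⁻¹.mulVec (cfun ε)) p.2) := by
        have heq : (fun ε => ((ABR A p.1)⁻¹.mulVec (cfun ε)) p.2) =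
            fun ε => ((ABR A p.1)⁻¹.mulVec bR) p.2 +
              ∑ k, ((ABR A p.1)⁻¹ * ABR A β₀) p.2 k * ε ^ ((k : ℕ) + 1) :=
          funext (hg p.1 p.2)
        rw [heq]
        exact continuous_const.add
          (continuous_finset_sum _ fun k _ => continuous_const.mul (continuous_pow _))
      have h0 : ((ABR A p.1)⁻¹.mulVec (cfun 0)) p.2 = ((ABR A p.1)⁻¹.mulVec bR) p.2 := by
        rw [hg]; simp
      have htd := hc.tendsto 0
      rw [h0] at htd
      have hev := htd.eventually_lt_const hp
      exact (hev.filter_mono nhdsWithin_le_nhds).mono (fun ε h _ _ => h)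
    · exact Filter.Eventually.of_forall (fun ε _ h2 => absurd h2 hp)
  have hev2 : ∀ᶠ ε in F, ∀ p : (Fin m → Fin n) × Fin m,
      (Function.Injective p.1 ∧ IsUnit (ABR A p.1).det) →
      ((ABR A p.1)⁻¹.mulVec (cfun ε)) p.2 ≠ 0 := by
    rw [Filter.eventually_all]
    intro p
    by_cases hp : Function.Injective p.1 ∧ IsUnit (ABR A p.1).det
    · set N := (ABR A p.1)⁻¹ * ABR A β₀ with hN
      have hNu : IsUnit N.det := by
        rw [hN, Matrix.det_mul]
        exact (Matrix.isUnit_nonsing_inv_det _ hp.2).mul hβ₀u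
      have hrow : ∃ k, N p.2 k ≠ 0 := by
        by_contra hall
        push_neg at hall
        have h1 : (N * N⁻¹) p.2 p.2 = 1 := by
          rw [Matrix.mul_nonsing_inv _ hNu, Matrix.one_apply_eq]
        rw [Matrix.mul_apply] at h1
        simp [hall] at h1
      set P : Polynomial ℝ := Polynomial.C (((ABR A p.1)⁻¹.mulVec bR) p.2) +
        ∑ k, Polynomial.C (N p.2 k) * Polynomial.X ^ ((k : ℕ) + 1) with hP
      have hPev : ∀ ε, P.eval ε = ((ABR A p.1)⁻¹.mulVec (cfun ε)) p.2 := by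
        intro ε
        rw [hg, hP]
        simp [Polynomial.eval_finset_sum]
        rfl
      have hPne : P ≠ 0 := by
        obtain ⟨k, hk⟩ := hrow
        intro h0
        have hco : P.coeff ((k : ℕ) + 1) = N p.2 k := by
          rw [hP]
          rw [Polynomial.coeff_add, Polynomial.coeff_C, if_neg (Nat.succ_ne_zero _)]
          rw [Polynomial.finset_sum_coeff]
          rw [Finset.sum_eq_single k]
          · rw [Polynomial.coeff_C_mul, Polynomial.coeff_X_pow, if_pos rfl, mul_one]
            exact zero_add _
          · intro k' _ hk'
            rw [Polynomial.coeff_C_mul, Polynomial.coeff_X_pow,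
              if_neg (fun h => hk' (Fin.val_injective (by omega))), mul_zero]
          · intro h; exact absurd (Finset.mem_univ k) h
        rw [h0, Polynomial.coeff_zero] at hco
        exact hk hco.symm
      have hroots : {ε : ℝ | P.IsRoot ε}.Finite := Polynomial.finite_setOf_isRoot hPne
      have hZc : IsClosed ({ε : ℝ | P.IsRoot ε} \ {0}) := hroots.diff.isClosed
      have h0mem : ({ε : ℝ | P.IsRoot ε} \ {0})ᶜ ∈ nhds (0 : ℝ) :=
        hZc.isOpen_compl.mem_nhds (by simp)
      have hev : ∀ᶠ ε in F, ε ∈ ({ε : ℝ | P.IsRoot ε} \ {0})ᶜ :=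
        nhdsWithin_le_nhds h0mem
      have hself : ∀ᶠ ε in F, ε ∈ Set.Ioi (0 : ℝ) := self_mem_nhdsWithin
      filter_upwards [hev, hself] with ε h1 h2
      intro _ heq
      apply h1
      exact ⟨by rw [Set.mem_setOf_eq, Polynomial.IsRoot, hPev]; exact heq,
        by simp [ne_of_gt (show (0:ℝ) < ε from h2)]⟩
    · exact Filter.Eventually.of_forall (fun ε h => absurd h hp)
  have hself : ∀ᶠ ε in F, ε ∈ Set.Ioi (0 : ℝ) := self_mem_nhdsWithin
  obtain ⟨ε, hεpos, H1, H2⟩ := (hself.and (hev1.and hev2)).exists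
  replace hεpos : (0:ℝ) < ε := hεpos
  set S : Finset (Fin m → Fin n) := Finset.univ.filter (fun β => Function.Injective β ∧
    IsUnit (ABR A β).det ∧ ∀ i, 0 ≤ ((ABR A β)⁻¹.mulVec (cfun ε)) i) with hS
  have hβ₀S : β₀ ∈ S := by
    rw [hS, Finset.mem_filter]
    refine ⟨Finset.mem_univ _, hβ₀i, hβ₀u, fun i => ?_⟩
    have hvv : (ABR A β₀)⁻¹.mulVec (cfun ε) = (ABR A β₀)⁻¹.mulVec bR + εv ε := by
      rw [hcfun]
      rw [Matrix.mulVec_add, Matrix.mulVec_mulVec, Matrix.nonsing_inv_mul _ hβ₀u,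
        Matrix.one_mulVec]
    rw [hvv, Pi.add_apply]
    have : 0 < εv ε i := pow_pos hεpos _
    have := hβ₀f i
    linarith
  obtain ⟨βs, hβsS, hβsmin⟩ := Finset.exists_min_image S
    (fun β => ∑ k, d (β k) * ((ABR A β)⁻¹.mulVec (cfun ε)) k) ⟨β₀, hβ₀S⟩
  rw [hS, Finset.mem_filter] at hβsS
  obtain ⟨-, hsi, hsu, hsf⟩ := hβsS
  have hrc : ∀ j, 0 ≤ redCost A d βs j := by
    by_contra hneg
    push_neg at hneg
    obtain ⟨j, hj⟩ := hneg
    by_cases hcase : ∃ i, 0 < ((ABR A βs)⁻¹.mulVec (fun i => (A i j : ℝ))) i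
    · obtain ⟨β', h'i, h'u, h'f, h'lt⟩ := pivot_step d hsi hsu hsf
        (fun i => H2 (βs, i) ⟨hsi, hsu⟩) hj hcase
      have hβ'S : β' ∈ S := by
        rw [hS, Finset.mem_filter]; exact ⟨Finset.mem_univ _, h'i, h'u, h'f⟩
      exact absurd (hβsmin β' hβ'S) (not_le.2 h'lt)
    · push_neg at hcase
      exact ray_contradiction hx₀ hd hsi hsu hj hcase
  have hfeasb : ∀ i, 0 ≤ ((ABR A βs)⁻¹.mulVec bR) i := by
    intro i
    by_contra hlt
    push_neg at hlt
    have := H1 (βs, i) ⟨hsi, hsu⟩ hlt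
    have h2 := hsf i
    linarith
  exact ⟨βs, ⟨hsi, hsu, hfeasb⟩, hrc⟩

set_option maxHeartbeats 800000 in
/-- Suppose `x°` is feasible for the IP, and for every `d` for which
`IP^d` has an optimal solution, every optimal basis `B̂` of `LP^d` satisfies
`val(IP^d) = val(G^{B̂,d})` (Gomory's asymptotic condition). Then
`⋃_{B ∈ ℬ} IFR(G^B, x°) = IFR(IP, x°)`, and consequently
`min_{B ∈ ℬ} val(INV(G^B, x°)) = val(INV(IP, x°))`. -/
theorem ifr_union_gcr_eq_ifr_ip_of_asymptotic
    (A : Matrix (Fin m) (Fin n) ℤ) (b : Fin m → ℤ) (c : Fin n → ℝ)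
    (hrank : A.rank = m)
    (x₀ : Fin n → ℤ) (hx₀ : IPfeas A b x₀)
    (hexact : ∀ d : Fin n → ℝ,
      (∃ x : Fin n → ℤ, IPfeas A b x ∧
        ∀ x' : Fin n → ℤ, IPfeas A b x' → objZ d x ≤ objZ d x') →
      ∀ β : Fin m → Fin n, OptBasis A b d β → valIP A b d = valG A b d β) :
    (⋃ β ∈ {β : Fin m → Fin n | FeasBasis A b β}, IFR_G A b β x₀) = IFR_IP A b x₀ ∧
    (⨅ β : {β : Fin m → Fin n // FeasBasis A b β}, invVal (IFR_G A b β.1 x₀) c) =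
      invVal (IFR_IP A b x₀) c := by
  classical
  have hsub : (⋃ β ∈ {β : Fin m → Fin n | FeasBasis A b β}, IFR_G A b β x₀) =
      IFR_IP A b x₀ := by
    apply Set.Subset.antisymm
    · intro d' hd'
      rw [Set.mem_iUnion₂] at hd'
      obtain ⟨β, _, hmem⟩ := hd'
      intro x hx
      exact hmem x ⟨hx.1, fun i _ => hx.2 i⟩
    · intro d' hd'
      have hd'' : ∀ x : Fin n → ℤ, IPfeas A b x → objZ d' x₀ ≤ objZ d' x := hd'
      obtain ⟨β, hopt⟩ := exists_optBasis hrank hx₀ hd''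
      have hval : valIP A b d' = ((objZ d' x₀ : ℝ) : EReal) := by
        apply le_antisymm
        · exact sInf_le ⟨x₀, hx₀, rfl⟩
        · apply le_sInf
          rintro v ⟨x, hx, rfl⟩
          exact EReal.coe_le_coe_iff.2 (hd'' x hx)
      have hexd := hexact d' ⟨x₀, hx₀, hd''⟩ β hopt
      rw [Set.mem_iUnion₂]
      refine ⟨β, hopt.1, ?_⟩
      intro x hx
      have h1 : valG A b d' β ≤ ((objZ d' x : ℝ) : EReal) := sInf_le ⟨x, hx, rfl⟩
      rw [← hexd, hval] at h1
      exact EReal.coe_le_coe_iff.1 h1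
  refine ⟨hsub, ?_⟩
  apply le_antisymm
  · rw [invVal]
    refine le_sInf ?_
    rintro v ⟨d', hd', rfl⟩
    rw [← hsub, Set.mem_iUnion₂] at hd'
    obtain ⟨β, hβ, hmem⟩ := hd'
    have step1 : (⨅ β : {β : Fin m → Fin n // FeasBasis A b β},
        invVal (IFR_G A b β.1 x₀) c) ≤ invVal (IFR_G A b β x₀) c :=
      iInf_le (fun β : {β : Fin m → Fin n // FeasBasis A b β} =>
        invVal (IFR_G A b β.1 x₀) c) ⟨β, hβ⟩
    have step2 : invVal (IFR_G A b β x₀) c ≤ ((‖d' - c‖ : ℝ) : EReal) := by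
      rw [invVal]
      exact sInf_le ⟨d', hmem, rfl⟩
    exact le_trans step1 step2
  · refine le_iInf fun β => ?_
    rw [invVal, invVal]
    apply sInf_le_sInf
    apply Set.image_mono
    intro d' hmem
    rw [← hsub]
    exact Set.mem_iUnion₂.2 ⟨β.1, β.2, hmem⟩

end InverseGCR17
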